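/- Let A ≤ Z(G) be a central subgroup of a group G, and R(x,y) = (y, y⁻¹xy). Then the induced map on (G × G)/A (quotient by the anti-diagonal action a·(x,y) = (ax, a⁻¹y)) satisfies R ∘ R = id if and only if the commutator [x,y] = xyx⁻¹y⁻¹ lies in A for all x,y ∈ G, i.e. if and only if G/A is abelian. -/
import Mathlib


/-- The conjugation Yang–Baxter operator on a group: `R(x,y) = (y, y⁻¹xy)`. -/
def conjR (G : Type*) [Group G] : G × G → G × G :=
  fun p => (p.2, p.2⁻¹ * p.1 * p.2)

theorem central_quotient_R_involutive_iff (G : Type*) [Group G]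
    (A : Subgroup G) (hA : A ≤ Subgroup.center G) :
    (∀ x y : G, ∃ a ∈ A, conjR G (conjR G (x, y)) = (a * x, a⁻¹ * y)) ↔
      (∀ x y : G, x * y * x⁻¹ * y⁻¹ ∈ A) := by
  constructor
  · intro h x y
    obtain ⟨a, ha, heq⟩ := h x y⁻¹
    have h1 : (y⁻¹)⁻¹ * x * y⁻¹ = a * x := congrArg Prod.fst heq
    have ha' : a = y * x * y⁻¹ * x⁻¹ := by
      apply mul_right_cancel (b := x)
      rw [← h1]; group
    have : (x * y * x⁻¹ * y⁻¹) = a⁻¹ := by rw [ha']; group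
    rw [this]
    exact A.inv_mem ha
  · intro h x y
    refine ⟨y⁻¹ * x * y * x⁻¹, ?_, ?_⟩
    · have : y⁻¹ * x * y * x⁻¹ = (x * y⁻¹ * x⁻¹ * (y⁻¹)⁻¹)⁻¹ := by group
      rw [this]
      exact A.inv_mem (h x y⁻¹)
    · have ha : y⁻¹ * x * y * x⁻¹ ∈ A := by
        have : y⁻¹ * x * y * x⁻¹ = (x * y⁻¹ * x⁻¹ * (y⁻¹)⁻¹)⁻¹ := by group
        rw [this]; exact A.inv_mem (h x y⁻¹)
      have hc := Subgroup.mem_center_iff.mp (hA ha)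
      have h2 := hc (y⁻¹ * x⁻¹ * y)
      have main : (y⁻¹ * x * y * x⁻¹) * ((y⁻¹ * x * y)⁻¹ * y * (y⁻¹ * x * y)) = y := by
        calc (y⁻¹ * x * y * x⁻¹) * ((y⁻¹ * x * y)⁻¹ * y * (y⁻¹ * x * y))
            = (y⁻¹ * x * y * x⁻¹) * (y⁻¹ * x⁻¹ * y) * (x * y) := by group
          _ = (y⁻¹ * x⁻¹ * y) * (y⁻¹ * x * y * x⁻¹) * (x * y) := by rw [← h2]
          _ = y := by group
      simp only [conjR, Prod.mk.injEq]
      constructor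
      · group
      · rw [eq_inv_mul_iff_mul_eq]
        exact main
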